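/- Let C be an odd cycle (as a simple graph), and suppose each edge e is assigned a list ℓ(e) of exactly 2 colours. If there is no proper edge-colouring of C choosing each edge's colour from its list, then all the lists ℓ(e) are identical. -/

import Mathlib

/-- Lists of size two on the edges of an odd cycle admit no proper edge-colouring
only if they are all identical. The edges of the cycle are indexed by `ZMod n`,
edge `i` being consecutive to edge `i + 1`. -/
theorem odd_cycle_lists_identical (n : ℕ) (hodd : Odd n) (hn : 3 ≤ n)
    (ℓ : ZMod n → Finset ℕ) (hcard : ∀ i, (ℓ i).card = 2)
    (hno : ¬ ∃ c : ZMod n → ℕ, (∀ i, c i ∈ ℓ i) ∧ ∀ i, c i ≠ c (i + 1)) :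
    ∀ i j : ZMod n, ℓ i = ℓ j := by
  haveI : NeZero n := ⟨by omega⟩
  haveI : Fact (1 < n) := ⟨by omega⟩
  have hadj : ∀ k : ZMod n, ℓ k = ℓ (k + 1) := by
    intro k
    by_contra hne
    apply hno
    have hsub : ¬ ℓ (k + 1) ⊆ ℓ k := by
      intro h
      exact hne (Finset.eq_of_subset_of_card_le h (by rw [hcard, hcard])).symm
    obtain ⟨a, ha1, ha0⟩ := Finset.not_subset.mp hsub
    have step : ∀ (i : ZMod n) (x : ℕ), ∃ y ∈ ℓ i, y ≠ x := fun i x =>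
      Finset.exists_mem_ne (by rw [hcard]; norm_num) x
    set g : ℕ → ℕ := fun m => Nat.rec a (fun m ih => (step (k + 1 + ((m + 1 : ℕ) : ZMod n)) ih).choose) m with hg
    have hgs : ∀ m : ℕ, g (m + 1) ∈ ℓ (k + 1 + ((m + 1 : ℕ) : ZMod n)) ∧ g (m + 1) ≠ g m := fun m =>
      ⟨(step (k + 1 + ((m + 1 : ℕ) : ZMod n)) (g m)).choose_spec.1,
       (step (k + 1 + ((m + 1 : ℕ) : ZMod n)) (g m)).choose_spec.2⟩
    have hmem : ∀ m : ℕ, g m ∈ ℓ (k + 1 + (m : ZMod n)) := by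
      intro m
      cases m with
      | zero => show a ∈ _; simpa using ha1
      | succ m => exact (hgs m).1
    have hval : ∀ i : ZMod n, k + 1 + (((i - (k + 1)).val : ℕ) : ZMod n) = i := by
      intro i
      rw [ZMod.natCast_val, ZMod.cast_id]; ring
    refine ⟨fun i => g ((i - (k + 1)).val), ?_, ?_⟩
    · intro i
      have h := hmem ((i - (k + 1)).val)
      rwa [hval i] at h
    · intro i
      show g ((i - (k + 1)).val) ≠ g ((i + 1 - (k + 1)).val)
      by_cases hik : i = k
      · have hck : g ((i - (k + 1)).val) ∈ ℓ i := by
          have h := hmem ((i - (k + 1)).val)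
          rwa [hval i] at h
        have h0 : (i + 1 - (k + 1)) = 0 := by rw [hik]; ring
        rw [h0, ZMod.val_zero]
        intro heq
        rw [heq] at hck
        rw [hik] at hck
        exact ha0 hck
      · set x := i - (k + 1) with hx
        have hxne : x ≠ -1 := by
          intro h
          apply hik
          have : i = (k + 1) + x := by rw [hx]; ring
          rw [this, h]; ring
        have hvx : x.val + 1 < n := by
          have hlt : x.val < n := ZMod.val_lt x
          rcases Nat.lt_or_ge (x.val + 1) n with h | h
          · exact h
          · exfalso
            have hxv : x.val = n - 1 := by omega
            apply hxne
            have h1 : ((x.val : ℕ) : ZMod n) = x := by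
              rw [ZMod.natCast_val, ZMod.cast_id]
            have h2 : ((n - 1 : ℕ) : ZMod n) = -1 := by
              rw [Nat.cast_sub (by omega : 1 ≤ n), ZMod.natCast_self]
              ring
            rw [← h1, hxv, h2]
        have hsucc : (i + 1 - (k + 1)).val = x.val + 1 := by
          have : i + 1 - (k + 1) = x + 1 := by rw [hx]; ring
          rw [this]
          rw [ZMod.val_add_of_lt]
          · rw [ZMod.val_one]
          · rw [ZMod.val_one]; exact hvx
        rw [hsucc]
        exact ((hgs x.val).2).symm
  have key : ∀ (m : ℕ) (i : ZMod n), ℓ i = ℓ (i + (m : ZMod n)) := by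
    intro m
    induction m with
    | zero => simp
    | succ m ih =>
      intro i
      rw [ih i]
      push_cast
      rw [← add_assoc]
      exact hadj _
  intro i j
  have h := key ((j - i).val) i
  have h2 : i + (((j - i).val : ℕ) : ZMod n) = j := by
    rw [ZMod.natCast_val, ZMod.cast_id]; ring
  rwa [h2] at h
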